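/- The polynomial X⁸ - 72X⁷ + 12X⁶ + 72X⁵ + 38X⁴ + 72X³ + 12X² - 72X + 1 is irreducible over ℚ, and all of its roots are algebraic units (its constant term is 1 and it is monic with integer coefficients). -/

import Mathlib

open Polynomial

noncomputable def P : Polynomial ℤ :=
  X ^ 8 - C 72 * X ^ 7 + C 12 * X ^ 6 + C 72 * X ^ 5 + C 38 * X ^ 4 +
    C 72 * X ^ 3 + C 12 * X ^ 2 - C 72 * X + C 1

def L1 : List ℤ := [1,-1]
def L64 : List ℤ := [1,-1,2,-2,4,-4,8,-8,16,-16,32,-32,64,-64]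
def L4799 : List ℤ := [1,-1,4799,-4799]
def L8161 : List ℤ := [1,-1,8161,-8161]
def L976991 : List ℤ := [1,-1,976991,-976991]
def L1226209 : List ℤ := [1,-1,1226209,-1226209]

lemma mem1 {v : ℤ} (h : v ∣ 1) : v ∈ L1 := by
  rcases Int.isUnit_iff.mp (isUnit_of_dvd_one h) with h | h <;> simp [h, L1]

lemma mem64 {v : ℤ} (h : v ∣ 64) : v ∈ L64 := by
  have h1 : v.natAbs ∣ 64 := by
    have := Int.natAbs_dvd_natAbs.mpr h; simpa using this
  have h2 : v.natAbs ≤ 64 := Nat.le_of_dvd (by norm_num) h1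
  have h3 := Int.natAbs_eq v
  set n := v.natAbs with hn
  interval_cases n <;>
    first
      | (exact absurd h1 (by decide))
      | (rcases h3 with h3 | h3 <;> rw [h3] <;> decide)

lemma memP {p : ℕ} (hp : p.Prime) {v : ℤ} (h : v ∣ (p:ℤ)) :
    v = 1 ∨ v = -1 ∨ v = (p:ℤ) ∨ v = -(p:ℤ) := by
  have h1 : v.natAbs ∣ p := by
    have := Int.natAbs_dvd_natAbs.mpr h; simpa using this
  rcases (Nat.Prime.eq_one_or_self_of_dvd hp _ h1) with h2 | h2 <;>
    rcases Int.natAbs_eq v with h3 | h3 <;> rw [h2] at h3 <;> simp [h3]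

lemma mem4799 {v : ℤ} (h : v ∣ 4799) : v ∈ L4799 := by
  rcases memP (p := 4799) (by norm_num) (by exact_mod_cast h) with h|h|h|h <;>
    rw [show v = _ from h] <;> decide
lemma mem8161 {v : ℤ} (h : v ∣ 8161) : v ∈ L8161 := by
  rcases memP (p := 8161) (by norm_num) (by exact_mod_cast h) with h|h|h|h <;>
    rw [show v = _ from h] <;> decide
lemma mem976991 {v : ℤ} (h : v ∣ 976991) : v ∈ L976991 := by
  rcases memP (p := 976991) (by norm_num) (by exact_mod_cast h) with h|h|h|h <;>
    rw [show v = _ from h] <;> decide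
lemma mem1226209 {v : ℤ} (h : v ∣ 1226209) : v ∈ L1226209 := by
  rcases memP (p := 1226209) (by norm_num) (by exact_mod_cast h) with h|h|h|h <;>
    rw [show v = _ from h] <;> decide

set_option maxRecDepth 10000 in
lemma key4 : ∀ a ∈ L8161, ∀ b ∈ L64, ∀ c ∈ L1, ∀ d ∈ L64, ∀ e ∈ L4799,
    e-4*d+6*c-4*b+a = 24 → (15*e-40*d+45*c-24*b+5*a) ∈ L976991 →
    (15*a-40*b+45*c-24*d+5*e) ∈ L1226209 → False := by decide

lemma key3 : ∀ b ∈ L64, ∀ c ∈ L1, ∀ d ∈ L64, ∀ e ∈ L4799,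
    e-3*d+3*c-b = 6 → (4*b-6*c+4*d-e) ∈ L8161 →
    (-4*b+15*c-20*d+10*e) ∈ L976991 → (20*b-45*c+36*d-10*e) ∈ L1226209 → False := by decide

lemma key2 : ∀ b ∈ L64, ∀ c ∈ L1, ∀ d ∈ L64,
    d-2*c+b = 2 → (3*d-3*c+b) ∈ L4799 → (3*b-3*c+d) ∈ L8161 →
    (6*b-15*c+10*d) ∈ L976991 → (6*d-15*c+10*b) ∈ L1226209 → False := by decide

lemma key1 : ∀ c ∈ L1, ∀ d ∈ L64,
    d-c = 1 → (2*d-c) ∈ L4799 → (2*c-d) ∈ L64 → (3*c-2*d) ∈ L8161 → False := by decide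

lemma P_monic : P.Monic := by unfold P; monicity!
lemma P_natDegree : P.natDegree = 8 := by unfold P; compute_degree!

lemma eval_formula4 {A : Polynomial ℤ} (hm : A.Monic) (hd : A.natDegree = 4) (x : ℤ) :
    A.eval x = x^4 + A.coeff 3 * x^3 + A.coeff 2 * x^2 + A.coeff 1 * x + A.coeff 0 := by
  have h4 : A.coeff 4 = 1 := by rw [← hd]; exact hm.coeff_natDegree
  rw [eval_eq_sum_range, hd]
  simp [Finset.sum_range_succ, h4]; ring

lemma eval_formula3 {A : Polynomial ℤ} (hm : A.Monic) (hd : A.natDegree = 3) (x : ℤ) :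
    A.eval x = x^3 + A.coeff 2 * x^2 + A.coeff 1 * x + A.coeff 0 := by
  have h3 : A.coeff 3 = 1 := by rw [← hd]; exact hm.coeff_natDegree
  rw [eval_eq_sum_range, hd]
  simp [Finset.sum_range_succ, h3]; ring

lemma eval_formula2 {A : Polynomial ℤ} (hm : A.Monic) (hd : A.natDegree = 2) (x : ℤ) :
    A.eval x = x^2 + A.coeff 1 * x + A.coeff 0 := by
  have h2 : A.coeff 2 = 1 := by rw [← hd]; exact hm.coeff_natDegree
  rw [eval_eq_sum_range, hd]
  simp [Finset.sum_range_succ, h2]; ring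

lemma eval_formula1 {A : Polynomial ℤ} (hm : A.Monic) (hd : A.natDegree = 1) (x : ℤ) :
    A.eval x = x + A.coeff 0 := by
  have h1 : A.coeff 1 = 1 := by rw [← hd]; exact hm.coeff_natDegree
  rw [eval_eq_sum_range, hd]
  simp [Finset.sum_range_succ, h1]; ring

lemma no_factor (A B : Polynomial ℤ) (hA : A.Monic) (hAB : P = A * B)
    (hlo : 1 ≤ A.natDegree) (hhi : A.natDegree ≤ 4) : False := by
  have hdvd : ∀ t : ℤ, A.eval t ∣ P.eval t := by
    intro t; rw [hAB]; exact ⟨B.eval t, by simp⟩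
  have d0 : A.eval 0 ∣ 1 := by have := hdvd 0; rwa [show P.eval 0 = 1 by norm_num [P]] at this
  have d1 : A.eval 1 ∣ 64 := by have := hdvd 1; rwa [show P.eval 1 = 64 by norm_num [P]] at this
  have dm1 : A.eval (-1) ∣ 64 := by
    have := hdvd (-1); rwa [show P.eval (-1) = 64 by norm_num [P]] at this
  have d2 : A.eval 2 ∣ 4799 := by
    have := hdvd 2; rw [show P.eval 2 = -4799 by norm_num [P]] at this
    exact dvd_neg.mp this
  have dm2 : A.eval (-2) ∣ 8161 := by
    have := hdvd (-2); rwa [show P.eval (-2) = 8161 by norm_num [P]] at this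
  have d4 : A.eval 4 ∣ 976991 := by
    have := hdvd 4; rw [show P.eval 4 = -976991 by norm_num [P]] at this
    exact dvd_neg.mp this
  have dm4 : A.eval (-4) ∣ 1226209 := by
    have := hdvd (-4); rwa [show P.eval (-4) = 1226209 by norm_num [P]] at this
  interval_cases hdeg : A.natDegree
  · -- degree 1
    have ev := eval_formula1 hA hdeg
    refine key1 (A.eval 0) (mem1 d0) (A.eval 1) (mem64 d1)
      (by rw [ev 0, ev 1]; ring) ?_ ?_ ?_
    · rw [show 2*A.eval 1 - A.eval 0 = A.eval 2 by rw [ev 0, ev 1, ev 2]; ring]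
      exact mem4799 d2
    · rw [show 2*A.eval 0 - A.eval 1 = A.eval (-1) by rw [ev 0, ev 1, ev (-1)]; ring]
      exact mem64 dm1
    · rw [show 3*A.eval 0 - 2*A.eval 1 = A.eval (-2) by rw [ev 0, ev 1, ev (-2)]; ring]
      exact mem8161 dm2
  · -- degree 2
    have ev := eval_formula2 hA hdeg
    refine key2 (A.eval (-1)) (mem64 dm1) (A.eval 0) (mem1 d0) (A.eval 1) (mem64 d1)
      (by rw [ev 0, ev 1, ev (-1)]; ring) ?_ ?_ ?_ ?_
    · rw [show 3*A.eval 1 - 3*A.eval 0 + A.eval (-1) = A.eval 2 by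
        rw [ev 0, ev 1, ev (-1), ev 2]; ring]
      exact mem4799 d2
    · rw [show 3*A.eval (-1) - 3*A.eval 0 + A.eval 1 = A.eval (-2) by
        rw [ev 0, ev 1, ev (-1), ev (-2)]; ring]
      exact mem8161 dm2
    · rw [show 6*A.eval (-1) - 15*A.eval 0 + 10*A.eval 1 = A.eval 4 by
        rw [ev 0, ev 1, ev (-1), ev 4]; ring]
      exact mem976991 d4
    · rw [show 6*A.eval 1 - 15*A.eval 0 + 10*A.eval (-1) = A.eval (-4) by
        rw [ev 0, ev 1, ev (-1), ev (-4)]; ring]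
      exact mem1226209 dm4
  · -- degree 3
    have ev := eval_formula3 hA hdeg
    refine key3 (A.eval (-1)) (mem64 dm1) (A.eval 0) (mem1 d0) (A.eval 1) (mem64 d1)
      (A.eval 2) (mem4799 d2)
      (by rw [ev 0, ev 1, ev (-1), ev 2]; ring) ?_ ?_ ?_
    · rw [show 4*A.eval (-1) - 6*A.eval 0 + 4*A.eval 1 - A.eval 2 = A.eval (-2) by
        rw [ev 0, ev 1, ev (-1), ev 2, ev (-2)]; ring]
      exact mem8161 dm2
    · rw [show -4*A.eval (-1) + 15*A.eval 0 - 20*A.eval 1 + 10*A.eval 2 = A.eval 4 by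
        rw [ev 0, ev 1, ev (-1), ev 2, ev 4]; ring]
      exact mem976991 d4
    · rw [show 20*A.eval (-1) - 45*A.eval 0 + 36*A.eval 1 - 10*A.eval 2 = A.eval (-4) by
        rw [ev 0, ev 1, ev (-1), ev 2, ev (-4)]; ring]
      exact mem1226209 dm4
  · -- degree 4
    have ev := eval_formula4 hA hdeg
    refine key4 (A.eval (-2)) (mem8161 dm2) (A.eval (-1)) (mem64 dm1) (A.eval 0) (mem1 d0)
      (A.eval 1) (mem64 d1) (A.eval 2) (mem4799 d2)
      (by rw [ev 0, ev 1, ev (-1), ev 2, ev (-2)]; ring) ?_ ?_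
    · rw [show 15*A.eval 2 - 40*A.eval 1 + 45*A.eval 0 - 24*A.eval (-1) + 5*A.eval (-2)
          = A.eval 4 by rw [ev 0, ev 1, ev (-1), ev 2, ev (-2), ev 4]; ring]
      exact mem976991 d4
    · rw [show 15*A.eval (-2) - 40*A.eval (-1) + 45*A.eval 0 - 24*A.eval 1 + 5*A.eval 2
          = A.eval (-4) by rw [ev 0, ev 1, ev (-1), ev 2, ev (-2), ev (-4)]; ring]
      exact mem1226209 dm4
lemma P_irreducible_int : Irreducible P := by
  rw [irreducible_iff]
  constructor
  · intro h
    have := natDegree_eq_zero_of_isUnit h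
    rw [P_natDegree] at this
    exact absurd this (by norm_num)
  · intro a b hab
    by_contra hcon
    push_neg at hcon
    obtain ⟨hua, hub⟩ := hcon
    have hP0 : P ≠ 0 := P_monic.ne_zero
    have ha0 : a ≠ 0 := by rintro rfl; simp at hab; exact hP0 hab
    have hb0 : b ≠ 0 := by rintro rfl; simp at hab; exact hP0 hab
    have hdeg : a.natDegree + b.natDegree = 8 := by
      rw [← natDegree_mul ha0 hb0, ← hab, P_natDegree]
    have hlead : a.leadingCoeff * b.leadingCoeff = 1 := by
      have := P_monic
      rw [Polynomial.Monic, hab, leadingCoeff_mul] at this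
      exact this
    -- degrees ≥ 1
    have hda : 1 ≤ a.natDegree := by
      by_contra h
      push_neg at h
      interval_cases h' : a.natDegree
      · have := Polynomial.eq_C_of_natDegree_eq_zero h'
        apply hua
        rw [this]
        refine isUnit_C.mpr (isUnit_of_mul_isUnit_left (y := b.leadingCoeff) ?_)
        have : a.coeff 0 = a.leadingCoeff := by
          rw [Polynomial.leadingCoeff, h']
        rw [this, hlead]; exact isUnit_one
    have hdb : 1 ≤ b.natDegree := by
      by_contra h
      push_neg at h
      interval_cases h' : b.natDegree
      · have := Polynomial.eq_C_of_natDegree_eq_zero h'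
        apply hub
        rw [this]
        refine isUnit_C.mpr (isUnit_of_mul_isUnit_right (x := a.leadingCoeff) ?_)
        have : b.coeff 0 = b.leadingCoeff := by
          rw [Polynomial.leadingCoeff, h']
        rw [this, hlead]; exact isUnit_one
    -- make monic
    obtain ⟨A, B, hAm, hABeq, hdA, hdB⟩ :
        ∃ A B : Polynomial ℤ, A.Monic ∧ P = A * B ∧
          A.natDegree = a.natDegree ∧ B.natDegree = b.natDegree := by
      rcases Int.isUnit_iff.mp (IsUnit.of_mul_eq_one _ hlead) with h1 | h1
      · exact ⟨a, b, h1, hab, rfl, rfl⟩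
      · refine ⟨-a, -b, ?_, by rw [neg_mul_neg]; exact hab, natDegree_neg a, natDegree_neg b⟩
        unfold Polynomial.Monic
        rw [leadingCoeff_neg, h1]; norm_num
    have hdegAB : A.natDegree + B.natDegree = 8 := by rw [hdA, hdB]; exact hdeg
    rcases le_total A.natDegree B.natDegree with hle | hle
    · exact no_factor A B hAm hABeq (hdA ▸ hda) (by omega)
    · have hBm : B.Monic := by
        have h2 : A.leadingCoeff * B.leadingCoeff = 1 := by
          have := P_monic
          rw [Polynomial.Monic, hABeq, leadingCoeff_mul] at this
          exact this
        rw [hAm] at h2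
        unfold Polynomial.Monic
        simpa using h2
      exact no_factor B A hBm (by rw [mul_comm] at hABeq; exact hABeq) (hdB ▸ hdb) (by omega)

set_option maxHeartbeats 1000000 in
theorem P_irreducible_and_unit_roots :
    Irreducible (P.map (Int.castRingHom ℚ)) ∧
    P.Monic ∧ P.coeff 0 = 1 ∧
    ∀ x : ℂ, Polynomial.aeval x P = 0 → IsIntegral ℤ x ∧ IsIntegral ℤ x⁻¹ := by
  refine ⟨(Polynomial.IsPrimitive.Int.irreducible_iff_irreducible_map_cast
      P_monic.isPrimitive).mp P_irreducible_int, P_monic, by simp [P, coeff_one], ?_⟩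
  intro x hx
  refine ⟨⟨P, P_monic, hx⟩, ⟨P, P_monic, ?_⟩⟩
  have hx0 : x ≠ 0 := by
    rintro rfl
    simp only [P, map_add, map_sub, map_mul, map_pow, map_one, map_ofNat, aeval_X, aeval_C] at hx
    norm_num at hx
  have hx' : x^8 - 72*x^7 + 12*x^6 + 72*x^5 + 38*x^4 + 72*x^3 + 12*x^2 - 72*x + 1 = 0 := by
    have h := hx
    simp only [P, map_add, map_sub, map_mul, map_pow, map_one, map_ofNat, aeval_X, aeval_C,
      algebraMap_int_eq, eq_intCast, Int.cast_ofNat] at h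
    linear_combination h
  have key : (x⁻¹)^8 - 72*(x⁻¹)^7 + 12*(x⁻¹)^6 + 72*(x⁻¹)^5 + 38*(x⁻¹)^4 + 72*(x⁻¹)^3
      + 12*(x⁻¹)^2 - 72*x⁻¹ + 1 = 0 := by
    have h8 : x^8 ≠ 0 := pow_ne_zero _ hx0
    apply mul_left_cancel₀ h8
    rw [mul_zero]
    have hinv : x * x⁻¹ = 1 := mul_inv_cancel₀ hx0
    calc x^8 * ((x⁻¹)^8 - 72*(x⁻¹)^7 + 12*(x⁻¹)^6 + 72*(x⁻¹)^5 + 38*(x⁻¹)^4 + 72*(x⁻¹)^3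
        + 12*(x⁻¹)^2 - 72*x⁻¹ + 1)
        = (x*x⁻¹)^8 - 72*(x*x⁻¹)^7*x + 12*(x*x⁻¹)^6*x^2 + 72*(x*x⁻¹)^5*x^3
          + 38*(x*x⁻¹)^4*x^4 + 72*(x*x⁻¹)^3*x^5 + 12*(x*x⁻¹)^2*x^6 - 72*(x*x⁻¹)*x^7
          + x^8 := by ring
      _ = 1 - 72*x + 12*x^2 + 72*x^3 + 38*x^4 + 72*x^5 + 12*x^6 - 72*x^7 + x^8 := by
          rw [hinv]; ring
      _ = 0 := by linear_combination hx'
  have expand : (aeval x⁻¹) P = x⁻¹^8 - 72*x⁻¹^7 + 12*x⁻¹^6 + 72*x⁻¹^5 + 38*x⁻¹^4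
      + 72*x⁻¹^3 + 12*x⁻¹^2 - 72*x⁻¹ + 1 := by
    simp only [P, map_add, map_sub, map_mul, map_pow, map_one, map_ofNat, aeval_X, aeval_C,
      algebraMap_int_eq, eq_intCast, Int.cast_ofNat]
  rw [← Polynomial.aeval_def, expand]
  linear_combination key
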